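/- Assume n ≥ 2, H = {B t : t ∈ ℝ^p} with Bᵀ B = I_p, and H ∩ int K_{n+1} = ∅. Then there exists d ∈ bd K_{n+1} with d ≠ 0 such that H ∩ K_{n+1} = {α d : α ≥ 0} if and only if ‖b‖² = 1/2, where bᵀ is the first row of B. Moreover, in that case one may take d = B b / ‖b‖. -/

import Mathlib

/-- Euclidean norm of the tail `x₁` of `x = (x₀; x₁) ∈ ℝ × ℝⁿ`. -/
noncomputable def tailNorm {n : ℕ} (x : EuclideanSpace ℝ (Fin (n + 1))) : ℝ :=
  Real.sqrt (∑ i : Fin n, x i.succ ^ 2)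

/-- The second-order cone `K_{n+1} = {(x₀; x₁) : ‖x₁‖ ≤ x₀}`. -/
def soc (n : ℕ) : Set (EuclideanSpace ℝ (Fin (n + 1))) :=
  {x | tailNorm x ≤ x 0}

/-- The boundary of the second-order cone: `{(x₀; x₁) : ‖x₁‖ = x₀}`. -/
def socBd (n : ℕ) : Set (EuclideanSpace ℝ (Fin (n + 1))) :=
  {x | tailNorm x = x 0}

/-- The interior of the second-order cone: `{(x₀; x₁) : ‖x₁‖ < x₀}`. -/
def socInt (n : ℕ) : Set (EuclideanSpace ℝ (Fin (n + 1))) :=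
  {x | tailNorm x < x 0}

/-- `x̂ = (x₀; −x₁)` for `x = (x₀; x₁)`. -/
def socHat {n : ℕ} (x : EuclideanSpace ℝ (Fin (n + 1))) : EuclideanSpace ℝ (Fin (n + 1)) :=
  WithLp.toLp 2 (fun i => if i = 0 then x 0 else -(x i))

/-- `B t` viewed as an element of Euclidean space. -/
def mvE {m p : ℕ} (B : Matrix (Fin m) (Fin p) ℝ) (t : Fin p → ℝ) : EuclideanSpace ℝ (Fin m) :=
  WithLp.toLp 2 (fun i => B.mulVec t i)

/-- A Euclidean vector viewed as a plain function. -/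
def toFun {m : ℕ} (x : EuclideanSpace ℝ (Fin m)) : Fin m → ℝ := x

open Matrix
section helper
variable {n p : ℕ} (B : Matrix (Fin (n + 1)) (Fin p) ℝ)

lemma mvE_apply (t : Fin p → ℝ) (i : Fin (n + 1)) : mvE B t i = ∑ j, B i j * t j := by
  simp [mvE, Matrix.mulVec, dotProduct]

lemma mvE_sq_sum (hB : B.transpose * B = 1) (t : Fin p → ℝ) :
    ∑ i, mvE B t i ^ 2 = ∑ j, t j ^ 2 := by
  have h2 : Bᵀ *ᵥ (B *ᵥ t) = t := by rw [Matrix.mulVec_mulVec, hB, Matrix.one_mulVec]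
  have h : (B *ᵥ t) ⬝ᵥ (B *ᵥ t) = t ⬝ᵥ t := by
    calc (B *ᵥ t) ⬝ᵥ (B *ᵥ t) = (t ᵥ* Bᵀ) ⬝ᵥ (B *ᵥ t) := by rw [Matrix.vecMul_transpose]
    _ = t ⬝ᵥ (Bᵀ *ᵥ (B *ᵥ t)) := (Matrix.dotProduct_mulVec t Bᵀ (B *ᵥ t)).symm
    _ = t ⬝ᵥ t := by rw [h2]
  simpa [dotProduct, pow_two, mvE] using h

lemma mvE_tail (hB : B.transpose * B = 1) (t : Fin p → ℝ) :
    ∑ i : Fin n, mvE B t i.succ ^ 2 = (∑ j, t j ^ 2) - (∑ j, B 0 j * t j) ^ 2 := by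
  have h := mvE_sq_sum B hB t
  rw [Fin.sum_univ_succ] at h
  rw [← h, mvE_apply B t 0]
  ring

lemma tail_nonneg (hB : B.transpose * B = 1) (t : Fin p → ℝ) :
    0 ≤ (∑ j, t j ^ 2) - (∑ j, B 0 j * t j) ^ 2 := by
  rw [← mvE_tail B hB t]; positivity

lemma mem_soc_iff (hB : B.transpose * B = 1) (t : Fin p → ℝ) :
    mvE B t ∈ soc n ↔ 0 ≤ (∑ j, B 0 j * t j) ∧ (∑ j, t j ^ 2) ≤ 2 * (∑ j, B 0 j * t j) ^ 2 := by
  have h0 : mvE B t 0 = ∑ j, B 0 j * t j := mvE_apply B t 0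
  simp only [soc, Set.mem_setOf_eq, tailNorm, mvE_tail B hB t, h0, Real.sqrt_le_iff]
  constructor
  · rintro ⟨h1, h2⟩; exact ⟨h1, by nlinarith⟩
  · rintro ⟨h1, h2⟩; exact ⟨h1, by nlinarith⟩

lemma mem_socInt_iff (hB : B.transpose * B = 1) (t : Fin p → ℝ) :
    mvE B t ∈ socInt n ↔ 0 < (∑ j, B 0 j * t j) ∧ (∑ j, t j ^ 2) < 2 * (∑ j, B 0 j * t j) ^ 2 := by
  have h0 : mvE B t 0 = ∑ j, B 0 j * t j := mvE_apply B t 0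
  have hA := tail_nonneg B hB t
  simp only [socInt, Set.mem_setOf_eq, tailNorm, mvE_tail B hB t, h0]
  constructor
  · intro h
    have hc : 0 < ∑ j, B 0 j * t j := lt_of_le_of_lt (Real.sqrt_nonneg _) h
    exact ⟨hc, by nlinarith [(Real.sqrt_lt' hc).mp h]⟩
  · rintro ⟨h1, h2⟩
    exact (Real.sqrt_lt' h1).mpr (by nlinarith)

lemma mem_socBd (hB : B.transpose * B = 1) (t : Fin p → ℝ)
    (h1 : 0 ≤ ∑ j, B 0 j * t j)
    (h2 : (∑ j, t j ^ 2) = 2 * (∑ j, B 0 j * t j) ^ 2) :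
    mvE B t ∈ socBd n := by
  have h0 : mvE B t 0 = ∑ j, B 0 j * t j := mvE_apply B t 0
  simp only [socBd, Set.mem_setOf_eq, tailNorm, mvE_tail B hB t, h0]
  rw [show (∑ j, t j ^ 2) - (∑ j, B 0 j * t j) ^ 2 = (∑ j, B 0 j * t j) ^ 2 by linarith]
  exact Real.sqrt_sq h1

lemma mvE_smul (a : ℝ) (t : Fin p → ℝ) : mvE B (a • t) = a • mvE B t := by
  ext i
  simp only [mvE_apply, PiLp.smul_apply, smul_eq_mul, Pi.smul_apply, Finset.mul_sum]
  exact Finset.sum_congr rfl fun j _ => by ring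

end helper

/-- Assume `n ≥ 2`, `H = {B t : t ∈ ℝ^p}` with `Bᵀ B = I_p`, and `H ∩ int K_{n+1} = ∅`. Then
there exists `d ∈ bd K_{n+1}` with `d ≠ 0` such that `H ∩ K_{n+1} = {α d : α ≥ 0}` if and
only if `‖b‖² = 1/2`, where `bᵀ` is the first row of `B`. Moreover, in that case one may take
`d = B b / ‖b‖`. -/
theorem stmt2 (n p : ℕ) (hn : 2 ≤ n)
    (B : Matrix (Fin (n + 1)) (Fin p) ℝ) (hB : B.transpose * B = 1)
    (H : Set (EuclideanSpace ℝ (Fin (n + 1))))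
    (hH : H = {u | ∃ t : Fin p → ℝ, u = mvE B t})
    (hdisj : H ∩ socInt n = ∅) :
    ((∃ d : EuclideanSpace ℝ (Fin (n + 1)), d ∈ socBd n ∧ d ≠ 0 ∧
        H ∩ soc n = {x | ∃ α : ℝ, 0 ≤ α ∧ x = α • d}) ↔ ∑ j, B 0 j ^ 2 = 1 / 2)
      ∧ (∑ j, B 0 j ^ 2 = 1 / 2 →
          H ∩ soc n =
            {x | ∃ α : ℝ, 0 ≤ α ∧
              x = α • ((Real.sqrt (∑ j, B 0 j ^ 2))⁻¹ • mvE B (fun j => B 0 j))}) := by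
  have hS0 : (0:ℝ) ≤ ∑ j, B 0 j ^ 2 := by positivity
  have hbb : (∑ j, B 0 j * (fun j => B 0 j) j) = ∑ j, B 0 j ^ 2 :=
    Finset.sum_congr rfl fun j _ => (pow_two (B 0 j)).symm
  have hbb2 : (∑ j, ((fun j => B 0 j) j) ^ 2) = ∑ j, B 0 j ^ 2 := rfl
  -- disjointness forces ‖b‖² ≤ 1/2
  have hSle : (∑ j, B 0 j ^ 2) ≤ 1 / 2 := by
    by_contra hgt
    push_neg at hgt
    have hSpos : (0:ℝ) < ∑ j, B 0 j ^ 2 := by linarith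
    have hmem : mvE B (fun j => B 0 j) ∈ H ∩ socInt n := by
      refine ⟨hH ▸ ⟨_, rfl⟩, ?_⟩
      rw [mem_socInt_iff B hB, hbb, hbb2]
      exact ⟨hSpos, by nlinarith⟩
    rw [hdisj] at hmem
    exact hmem
  -- the "moreover" part
  have key : (∑ j, B 0 j ^ 2) = 1 / 2 →
      H ∩ soc n = {x | ∃ α : ℝ, 0 ≤ α ∧
        x = α • ((Real.sqrt (∑ j, B 0 j ^ 2))⁻¹ • mvE B (fun j => B 0 j))} := by
    intro hS
    have hs2 : Real.sqrt (∑ j, B 0 j ^ 2) ^ 2 = ∑ j, B 0 j ^ 2 := Real.sq_sqrt hS0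
    have hspos : 0 < Real.sqrt (∑ j, B 0 j ^ 2) := Real.sqrt_pos.mpr (by rw [hS]; norm_num)
    set s := Real.sqrt (∑ j, B 0 j ^ 2) with hsdef
    ext x
    simp only [hH, Set.mem_inter_iff, Set.mem_setOf_eq]
    constructor
    · rintro ⟨⟨t, rfl⟩, hsoc⟩
      rw [mem_soc_iff B hB] at hsoc
      obtain ⟨hc, ht⟩ := hsoc
      obtain ⟨c, hcdef⟩ : ∃ c : ℝ, c = ∑ j, B 0 j * t j := ⟨_, rfl⟩
      rw [← hcdef] at hc ht
      have hzero : ∑ j, (t j - 2 * c * B 0 j) ^ 2 = 0 := by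
        have expand : ∑ j, (t j - 2 * c * B 0 j) ^ 2
            = (∑ j, t j ^ 2) - (4 * c) * (∑ j, B 0 j * t j)
              + (4 * c ^ 2) * (∑ j, B 0 j ^ 2) := by
          rw [Finset.sum_congr rfl fun j (_ : j ∈ Finset.univ) =>
            show (t j - 2 * c * B 0 j) ^ 2
              = t j ^ 2 - (4 * c) * (B 0 j * t j) + (4 * c ^ 2) * (B 0 j ^ 2) from by ring,
            Finset.sum_add_distrib, Finset.sum_sub_distrib, ← Finset.mul_sum, ← Finset.mul_sum]
        have hle : ∑ j, (t j - 2 * c * B 0 j) ^ 2 ≤ 0 := by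
          rw [expand, ← hcdef, hS]; nlinarith
        have h0 : 0 ≤ ∑ j, (t j - 2 * c * B 0 j) ^ 2 := by positivity
        linarith
      have htj : ∀ j, t j = 2 * c * B 0 j := by
        intro j
        have h1 := (Finset.sum_eq_zero_iff_of_nonneg
          (fun j _ => sq_nonneg (t j - 2 * c * B 0 j))).mp hzero j (Finset.mem_univ j)
        have h2 := sq_eq_zero_iff.mp h1
        linarith
      refine ⟨2 * c * s, mul_nonneg (by linarith) hspos.le, ?_⟩
      have ht2 : t = (2 * c) • (fun j => B 0 j) := funext fun j => by
        simp [htj j]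
      rw [ht2, mvE_smul, smul_smul]
      congr 1
      rw [mul_assoc, mul_inv_cancel₀ hspos.ne', mul_one]
    · rintro ⟨α, hα, rfl⟩
      have hx : α • (s⁻¹ • mvE B fun j => B 0 j) = mvE B ((α * s⁻¹) • fun j => B 0 j) := by
        rw [mvE_smul, smul_smul]
      rw [hx]
      have hβ0 : 0 ≤ α * s⁻¹ := mul_nonneg hα (by positivity)
      refine ⟨⟨_, rfl⟩, ?_⟩
      rw [mem_soc_iff B hB]
      have e1 : (∑ j, B 0 j * (((α * s⁻¹) • fun j => B 0 j) j))
          = (α * s⁻¹) * ∑ j, B 0 j ^ 2 := by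
        rw [Finset.mul_sum]
        exact Finset.sum_congr rfl fun j _ => by
          simp only [Pi.smul_apply, smul_eq_mul]; ring
      have e2 : (∑ j, (((α * s⁻¹) • fun j => B 0 j) j) ^ 2)
          = (α * s⁻¹) ^ 2 * ∑ j, B 0 j ^ 2 := by
        rw [Finset.mul_sum]
        exact Finset.sum_congr rfl fun j _ => by
          simp only [Pi.smul_apply, smul_eq_mul]; ring
      rw [e1, e2, hS]
      constructor
      · positivity
      · nlinarith [sq_nonneg (α * s⁻¹)]
  refine ⟨⟨?_, ?_⟩, key⟩
  · rintro ⟨d, hdbd, hdne, hset⟩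
    by_contra hne
    have hlt : (∑ j, B 0 j ^ 2) < 1 / 2 := lt_of_le_of_ne hSle hne
    have hd : d ∈ H ∩ soc n := by
      rw [hset]; exact ⟨1, zero_le_one, (one_smul _ _).symm⟩
    rw [hH] at hd
    obtain ⟨⟨t, rfl⟩, hsoc⟩ := hd
    rw [mem_soc_iff B hB] at hsoc
    obtain ⟨hc, ht⟩ := hsoc
    have cs := Finset.sum_mul_sq_le_sq_mul_sq Finset.univ (fun j => B 0 j) t
    have hc2 : (∑ j, B 0 j * t j) ^ 2 ≤ 0 := by nlinarith
    have hc0 : (∑ j, B 0 j * t j) = 0 :=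
      sq_eq_zero_iff.mp (le_antisymm hc2 (sq_nonneg _))
    have htt : (∑ j, t j ^ 2) = 0 := by
      have : (∑ j, t j ^ 2) ≤ 0 := by rw [hc0] at ht; nlinarith
      exact le_antisymm this (by positivity)
    have htj : ∀ j, t j = 0 := fun j =>
      sq_eq_zero_iff.mp ((Finset.sum_eq_zero_iff_of_nonneg
        (fun j _ => sq_nonneg (t j))).mp htt j (Finset.mem_univ j))
    exact hdne (PiLp.ext fun i => by simp [mvE_apply, htj])
  · intro hS
    have hs2 : Real.sqrt (∑ j, B 0 j ^ 2) ^ 2 = ∑ j, B 0 j ^ 2 := Real.sq_sqrt hS0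
    have hspos : 0 < Real.sqrt (∑ j, B 0 j ^ 2) := Real.sqrt_pos.mpr (by rw [hS]; norm_num)
    set s := Real.sqrt (∑ j, B 0 j ^ 2) with hsdef
    refine ⟨s⁻¹ • mvE B (fun j => B 0 j), ?_, ?_, key hS⟩
    · have hd : s⁻¹ • mvE B (fun j => B 0 j) = mvE B (s⁻¹ • fun j => B 0 j) :=
        (mvE_smul B s⁻¹ _).symm
      rw [hd]
      have e1 : (∑ j, B 0 j * ((s⁻¹ • fun j => B 0 j) j)) = s⁻¹ * ∑ j, B 0 j ^ 2 := by
        rw [Finset.mul_sum]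
        exact Finset.sum_congr rfl fun j _ => by
          simp only [Pi.smul_apply, smul_eq_mul]; ring
      have e2 : (∑ j, ((s⁻¹ • fun j => B 0 j) j) ^ 2) = s⁻¹ ^ 2 * ∑ j, B 0 j ^ 2 := by
        rw [Finset.mul_sum]
        exact Finset.sum_congr rfl fun j _ => by
          simp only [Pi.smul_apply, smul_eq_mul]; ring
      refine mem_socBd B hB _ ?_ ?_
      · rw [e1]; positivity
      · rw [e1, e2, hS]; nlinarith [hs2, hS]
    · intro h
      have h0 : (s⁻¹ • mvE B (fun j => B 0 j)) 0 = 0 := by rw [h]; rfl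
      rw [PiLp.smul_apply, smul_eq_mul, mvE_apply, hbb, hS] at h0
      have : (0:ℝ) < s⁻¹ * (1 / 2) := by positivity
      linarith
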